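/- arXiv:2110.04344 — 7 statements merged into one kernel-verified Lean document; each statement's English description precedes it below -/
import Mathlib

section
/- Let P ⊆ [0,1]^n be a polytope and t a positive integer with t ≤ n. Then iterating the t-branch split closure ⌈n/t⌉ times yields the integer hull of P: tSC^(⌈n/t⌉)(P) = conv(P ∩ {0,1}^n). -/
/-- The `t`-branch split closure of a set `P ⊆ ℝⁿ`. -/
def tBranchSplitClosure (t n : ℕ) (P : Set (Fin n → ℝ)) : Set (Fin n → ℝ) :=
  ⋂ (π : Fin t → Fin n → ℤ) (π₀ : Fin t → ℤ),
    convexHull ℝ (⋂ j : Fin t,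
      ({x ∈ P | ∑ i, (π j i : ℝ) * x i ≤ (π₀ j : ℝ)} ∪
       {x ∈ P | ((π₀ j : ℝ) + 1) ≤ ∑ i, (π j i : ℝ) * x i}))

open Set

abbrev cube (n : ℕ) : Set (Fin n → ℝ) := Set.Icc (fun _ => (0:ℝ)) (fun _ => (1:ℝ))

lemma cube_convex (n : ℕ) : Convex ℝ (cube n) := convex_Icc _ _

lemma cube_bounds {n : ℕ} {x : Fin n → ℝ} (hx : x ∈ cube n) (i : Fin n) :
    0 ≤ x i ∧ x i ≤ 1 := ⟨hx.1 i, hx.2 i⟩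

lemma face1 {n : ℕ} (S : Set (Fin n → ℝ)) (hS : S ⊆ cube n) (a : Fin n) (x : Fin n → ℝ)
    (hx : x ∈ convexHull ℝ S) (h : x a = 0 ∨ x a = 1) :
    x ∈ convexHull ℝ {y ∈ S | y a = x a} := by
  rw [convexHull_eq] at hx
  obtain ⟨ι, tt, w, z, hw0, hw1, hz, hcm⟩ := hx
  have hx_eq : ∑ i ∈ tt, w i • z i = x := by
    rw [Finset.centerMass_eq_of_sum_1 _ _ hw1] at hcm; exact hcm
  have hxa : ∑ i ∈ tt, w i * z i a = x a := by
    have := congrFun hx_eq a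
    simpa [Finset.sum_apply] using this
  have key : ∀ i ∈ tt, w i ≠ 0 → z i a = x a := by
    rcases h with h | h
    · intro i hi hwi
      rw [h] at hxa ⊢
      have hnn : ∀ j ∈ tt, 0 ≤ w j * z j a := fun j hj =>
        mul_nonneg (hw0 j hj) ((cube_bounds (hS (hz j hj)) a).1)
      have := (Finset.sum_eq_zero_iff_of_nonneg hnn).1 hxa i hi
      rcases mul_eq_zero.1 this with h' | h'
      · exact absurd h' hwi
      · exact h'
    · intro i hi hwi
      rw [h] at hxa ⊢
      have hzero : ∑ j ∈ tt, w j * (1 - z j a) = 0 := by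
        have : ∑ j ∈ tt, w j * (1 - z j a) = (∑ j ∈ tt, w j) - ∑ j ∈ tt, w j * z j a := by
          rw [← Finset.sum_sub_distrib]
          exact Finset.sum_congr rfl fun j _ => by ring
        rw [this, hw1, hxa]; ring
      have hnn : ∀ j ∈ tt, 0 ≤ w j * (1 - z j a) := fun j hj =>
        mul_nonneg (hw0 j hj) (by linarith [(cube_bounds (hS (hz j hj)) a).2])
      have := (Finset.sum_eq_zero_iff_of_nonneg hnn).1 hzero i hi
      rcases mul_eq_zero.1 this with h' | h'
      · exact absurd h' hwi
      · linarith
  set tt' := tt.filter (fun i => w i ≠ 0) with htt'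
  have hsub : tt' ⊆ tt := Finset.filter_subset _ _
  have hzero' : ∀ i ∈ tt, i ∉ tt' → w i = 0 := by
    intro i hi hni
    by_contra hwi
    exact hni (Finset.mem_filter.2 ⟨hi, hwi⟩)
  have hw1' : ∑ i ∈ tt', w i = 1 := by
    rw [← hw1]
    exact Finset.sum_subset hsub (fun i hi hni => hzero' i hi hni)
  have hcm' : tt'.centerMass w z = x := by
    rw [Finset.centerMass_eq_of_sum_1 _ _ hw1', ← hx_eq]
    exact Finset.sum_subset hsub (fun i hi hni => by rw [hzero' i hi hni, zero_smul])
  have hmem : tt'.centerMass w z ∈ convexHull ℝ {y ∈ S | y a = x a} :=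
    Finset.centerMass_mem_convexHull _ (fun i hi => hw0 i (hsub hi))
      (by rw [hw1']; norm_num)
      (fun i hi => ⟨hz i (hsub hi), key i (hsub hi) (Finset.mem_filter.1 hi).2⟩)
  rwa [hcm'] at hmem

lemma faceB {n : ℕ} (B : Finset (Fin n)) :
    ∀ (S : Set (Fin n → ℝ)), S ⊆ cube n → ∀ x ∈ convexHull ℝ S,
      (∀ i ∈ B, x i = 0 ∨ x i = 1) →
      x ∈ convexHull ℝ {y ∈ S | ∀ i ∈ B, y i = 0 ∨ y i = 1} := by
  induction B using Finset.induction with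
  | empty => intro S hS x hx _; simpa using hx
  | @insert a B ha IH =>
    intro S hS x hx hB
    have h1 := face1 S hS a x hx (hB a (Finset.mem_insert_self a B))
    have h2 := IH {y ∈ S | y a = x a} (fun y hy => hS hy.1) x h1
      (fun i hi => hB i (Finset.mem_insert_of_mem hi))
    refine convexHull_mono ?_ h2
    rintro y ⟨⟨hyS, hya⟩, hyB⟩
    refine ⟨hyS, fun i hi => ?_⟩
    rcases Finset.mem_insert.1 hi with rfl | hi'
    · rw [hya]; exact hB i (Finset.mem_insert_self i B)
    · exact hyB i hi'

lemma tSC_mono {t n : ℕ} {A B : Set (Fin n → ℝ)} (h : A ⊆ B) :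
    tBranchSplitClosure t n A ⊆ tBranchSplitClosure t n B := by
  refine Set.iInter_mono fun π => Set.iInter_mono fun π₀ => convexHull_mono ?_
  refine Set.iInter_mono fun j => Set.union_subset_union ?_ ?_ <;>
    exact fun x hx => ⟨h hx.1, hx.2⟩

def Fix01 (n m : ℕ) : Set (Fin n → ℝ) := {x | ∀ i : Fin n, (i : ℕ) < m → x i = 0 ∨ x i = 1}

lemma step {t n : ℕ} (ht : 0 < t) (htn : t ≤ n) (P : Set (Fin n → ℝ)) (hP : P ⊆ cube n)
    (m : ℕ) :
    tBranchSplitClosure t n (convexHull ℝ (P ∩ Fix01 n (m * t))) ⊆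
      convexHull ℝ (P ∩ Fix01 n ((m + 1) * t)) := by
  have hn : 0 < n := lt_of_lt_of_le ht htn
  set Q := convexHull ℝ (P ∩ Fix01 n (m * t)) with hQdef
  have hQcube : Q ⊆ cube n :=
    convexHull_min (fun x hx => hP hx.1) (cube_convex n)
  set e : Fin t → Fin n := fun j => if h : m * t + (j : ℕ) < n then ⟨m * t + j, h⟩ else ⟨0, hn⟩
    with he
  set π : Fin t → Fin n → ℤ := fun j i => if i = e j then 1 else 0 with hπ
  set π₀ : Fin t → ℤ := fun _ => 0 with hπ₀
  intro x hx
  have hx1 : x ∈ convexHull ℝ (⋂ j : Fin t,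
      ({y ∈ Q | ∑ i, (π j i : ℝ) * y i ≤ (π₀ j : ℝ)} ∪
       {y ∈ Q | ((π₀ j : ℝ) + 1) ≤ ∑ i, (π j i : ℝ) * y i})) := by
    have := Set.mem_iInter.1 hx π
    exact Set.mem_iInter.1 this π₀
  have hsum : ∀ (j : Fin t) (y : Fin n → ℝ), ∑ i, (π j i : ℝ) * y i = y (e j) := by
    intro j y
    rw [hπ]
    simp [apply_ite (fun z : ℤ => (z : ℝ)), ite_mul, Finset.sum_ite_eq']
  have hsub1 : (⋂ j : Fin t,
      ({y ∈ Q | ∑ i, (π j i : ℝ) * y i ≤ (π₀ j : ℝ)} ∪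
       {y ∈ Q | ((π₀ j : ℝ) + 1) ≤ ∑ i, (π j i : ℝ) * y i})) ⊆
      {y ∈ Q | ∀ j : Fin t, y (e j) = 0 ∨ y (e j) = 1} := by
    intro y hy
    have hj : ∀ j : Fin t, y ∈ Q ∧ (y (e j) = 0 ∨ y (e j) = 1) := by
      intro j
      have := Set.mem_iInter.1 hy j
      rcases this with ⟨hyQ, hle⟩ | ⟨hyQ, hge⟩
      · rw [hsum j y] at hle
        refine ⟨hyQ, Or.inl (le_antisymm (by rw [hπ₀] at hle; simpa using hle) ((cube_bounds (hQcube hyQ) _).1))⟩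
      · rw [hsum j y] at hge
        refine ⟨hyQ, Or.inr (le_antisymm ((cube_bounds (hQcube hyQ) _).2) (by rw [hπ₀] at hge; simpa using hge))⟩
    exact ⟨(hj ⟨0, ht⟩).1, fun j => (hj j).2⟩
  have hx2 : x ∈ convexHull ℝ {y ∈ Q | ∀ j : Fin t, y (e j) = 0 ∨ y (e j) = 1} :=
    convexHull_mono hsub1 hx1
  -- now apply faceB inside
  refine convexHull_min ?_ (convex_convexHull ℝ _) hx2
  rintro y ⟨hyQ, hyE⟩
  have hy' := faceB (Finset.image e Finset.univ) (P ∩ Fix01 n (m * t))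
    (fun z hz => hP hz.1) y hyQ
    (by
      intro i hi
      obtain ⟨j, _, rfl⟩ := Finset.mem_image.1 hi
      exact hyE j)
  refine convexHull_mono ?_ hy'
  rintro z ⟨⟨hzP, hzF⟩, hzB⟩
  refine ⟨hzP, fun i hilt => ?_⟩
  have hmt : (m + 1) * t = m * t + t := by ring
  by_cases hcase : (i : ℕ) < m * t
  · exact hzF i hcase
  · push_neg at hcase
    have hjlt : (i : ℕ) - m * t < t := by omega
    have hval : m * t + ((i : ℕ) - m * t) = (i : ℕ) := by omega
    have hmem : i ∈ Finset.image e Finset.univ := by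
      refine Finset.mem_image.2 ⟨⟨(i : ℕ) - m * t, hjlt⟩, Finset.mem_univ _, ?_⟩
      rw [he]
      have h1 : m * t + ((i : ℕ) - m * t) < n := by
        have := i.isLt; omega
      simp only [dif_pos h1]
      exact Fin.ext (by simp only [Fin.val_mk]; exact hval)
    exact hzB i hmem

lemma iter_subset {t n : ℕ} (ht : 0 < t) (htn : t ≤ n) (P : Set (Fin n → ℝ))
    (hP : P ⊆ cube n) :
    ∀ m : ℕ, (tBranchSplitClosure t n)^[m] P ⊆ convexHull ℝ (P ∩ Fix01 n (m * t)) := by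
  intro m
  induction m with
  | zero =>
    intro x hx
    exact subset_convexHull ℝ _ ⟨hx, fun i hi => absurd hi (by omega)⟩
  | succ m IH =>
    rw [Function.iterate_succ_apply']
    calc tBranchSplitClosure t n ((tBranchSplitClosure t n)^[m] P)
        ⊆ tBranchSplitClosure t n (convexHull ℝ (P ∩ Fix01 n (m * t))) := tSC_mono IH
      _ ⊆ convexHull ℝ (P ∩ Fix01 n ((m + 1) * t)) := step ht htn P hP m

lemma hull_subset_iter {t n : ℕ} (P : Set (Fin n → ℝ)) (hconv : Convex ℝ P) :
    ∀ k : ℕ, convexHull ℝ (P ∩ {x | ∀ i, x i = 0 ∨ x i = 1}) ⊆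
      (tBranchSplitClosure t n)^[k] P := by
  intro k
  induction k with
  | zero => exact convexHull_min Set.inter_subset_left hconv
  | succ k IH =>
    rw [Function.iterate_succ_apply']
    set Q := (tBranchSplitClosure t n)^[k] P with hQ
    intro x hx
    refine Set.mem_iInter.2 fun π => Set.mem_iInter.2 fun π₀ => ?_
    refine convexHull_mono ?_ hx
    rintro y ⟨hyP, hy01⟩
    have hyQ : y ∈ Q := IH (subset_convexHull ℝ _ ⟨hyP, hy01⟩)
    refine Set.mem_iInter.2 fun j => ?_
    have hint : ∃ M : ℤ, ∑ i, (π j i : ℝ) * y i = (M : ℝ) := by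
      refine ⟨∑ i, π j i * (if y i = 1 then 1 else 0), ?_⟩
      push_cast
      refine Finset.sum_congr rfl fun i _ => ?_
      rcases hy01 i with h | h <;> simp [h]
    obtain ⟨M, hM⟩ := hint
    rcases le_or_gt M (π₀ j) with hle | hlt
    · exact Or.inl ⟨hyQ, by rw [hM]; exact_mod_cast hle⟩
    · refine Or.inr ⟨hyQ, by rw [hM]; exact_mod_cast hlt⟩

theorem stmt_7 (t n : ℕ) (ht : 0 < t) (htn : t ≤ n) (P : Set (Fin n → ℝ))
    (hconv : Convex ℝ P) (hcompact : IsCompact P)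
    (hcube : P ⊆ Set.Icc (fun _ => (0 : ℝ)) (fun _ => (1 : ℝ))) :
    (tBranchSplitClosure t n)^[⌈(n : ℚ) / t⌉.toNat] P =
      convexHull ℝ (P ∩ {x | ∀ i, x i = 0 ∨ x i = 1}) := by
  set k := ⌈(n : ℚ) / t⌉.toNat with hk
  have htQ : (0 : ℚ) < t := by exact_mod_cast ht
  have hnk : n ≤ k * t := by
    have h1 : (n : ℚ) / t ≤ (⌈(n : ℚ) / t⌉ : ℚ) := Int.le_ceil _
    have h2 : (0 : ℤ) ≤ ⌈(n : ℚ) / t⌉ := Int.ceil_nonneg (by positivity)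
    have h3 : ((k : ℤ) : ℚ) = (⌈(n : ℚ) / t⌉ : ℚ) := by
      rw [hk, Int.toNat_of_nonneg h2]
    have h4 : (n : ℚ) ≤ (k : ℚ) * t := by
      rw [div_le_iff₀ htQ] at h1
      calc (n : ℚ) ≤ (⌈(n : ℚ) / t⌉ : ℚ) * t := h1
        _ = (k : ℚ) * t := by rw [← h3]; push_cast; ring
    exact_mod_cast h4
  apply Set.Subset.antisymm
  · refine (iter_subset ht htn P hcube k).trans (convexHull_mono ?_)
    rintro x ⟨hxP, hxF⟩
    exact ⟨hxP, fun i => hxF i (lt_of_lt_of_le i.isLt hnk)⟩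
  · exact hull_subset_iter P hconv k
end

section
/- Let t ≥ 1, let x ∈ {0, 1/2, 1}^n with at least t fractional coordinates, and let π¹,…,π^t ∈ ℤ^n. Then there exists a subset J of the fractional coordinates of x with |J| ≤ t such that ⟨π^i, x^(J,0)⟩ ∈ ℤ and ⟨π^i, x^(J,1)⟩ ∈ ℤ for all i = 1,…,t. -/
theorem stmt_10 (t n : ℕ) (ht : 1 ≤ t) (x : Fin n → ℝ)
    (hhalf : ∀ i, x i = 0 ∨ x i = 1 / 2 ∨ x i = 1)
    (hfrac : t ≤ (Finset.univ.filter fun i => x i = 1 / 2).card)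
    (π : Fin t → Fin n → ℤ) :
    ∃ J : Finset (Fin n), (∀ j ∈ J, x j = 1 / 2) ∧ J.card ≤ t ∧
      ∀ i : Fin t,
        (∃ m : ℤ, ∑ k, (π i k : ℝ) * (if k ∈ J then (0 : ℝ) else x k) = (m : ℝ)) ∧
        (∃ m : ℤ, ∑ k, (π i k : ℝ) * (if k ∈ J then (1 : ℝ) else x k) = (m : ℝ)) := by
  classical
  set E : Finset (Fin n) := Finset.univ.filter fun i => x i = 1 / 2 with hE
  set v : Fin n → Fin t → ZMod 2 := fun k i => (π i k : ZMod 2) with hv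
  set w : Fin t → ZMod 2 := ∑ k ∈ E, v k with hw
  obtain ⟨J, hJmem, hJmin⟩ := Finset.exists_min_image
    ((E.powerset).filter fun J => ∑ j ∈ J, v j = w) Finset.card
    ⟨E, by simp [hw]⟩
  rw [Finset.mem_filter, Finset.mem_powerset] at hJmem
  obtain ⟨hJE, hJsum⟩ := hJmem
  have hJfrac : ∀ j ∈ J, x j = 1 / 2 := fun j hj => by
    have := hJE hj
    rw [hE, Finset.mem_filter] at this
    exact this.2
  have hone : ∀ a : ZMod 2, a ≠ 0 → a = 1 := by decide
  -- linear independence of v restricted to J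
  have hindep : LinearIndependent (ZMod 2) (fun j : J => v j.1) := by
    rw [Fintype.linearIndependent_iff]
    intro g hg
    by_contra hcon
    push_neg at hcon
    obtain ⟨j0, hj0⟩ := hcon
    set K : Finset (Fin n) := (J.attach.filter fun j => g j ≠ 0).image Subtype.val with hK
    have hKJ : K ⊆ J := by
      intro k hk
      rw [hK] at hk
      simp only [Finset.mem_image, Finset.mem_filter] at hk
      obtain ⟨j, ⟨_, _⟩, rfl⟩ := hk
      exact j.2
    have hKne : j0.1 ∈ K := by
      rw [hK]
      simp only [Finset.mem_image, Finset.mem_filter]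
      exact ⟨j0, ⟨Finset.mem_attach _ _, hj0⟩, rfl⟩
    have hKsum : ∑ j ∈ K, v j = 0 := by
      rw [hK, Finset.sum_image (fun a _ b _ h => Subtype.ext h), Finset.sum_filter]
      calc ∑ j ∈ J.attach, (if g j ≠ 0 then v j.1 else 0)
          = ∑ j ∈ J.attach, g j • v j.1 := by
            apply Finset.sum_congr rfl
            intro j _
            by_cases h : g j = 0
            · simp [h]
            · rw [if_pos h, hone _ h, one_smul]
        _ = 0 := by rw [← Finset.univ_eq_attach]; exact hg
    have hsub : J \ K ∈ (E.powerset).filter fun J => ∑ j ∈ J, v j = w := by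
      rw [Finset.mem_filter, Finset.mem_powerset]
      constructor
      · exact (Finset.sdiff_subset).trans hJE
      · have := Finset.sum_sdiff hKJ (f := v)
        rw [hKsum] at this
        simpa [hJsum] using this
    have hlt : (J \ K).card < J.card :=
      Finset.card_lt_card (Finset.sdiff_ssubset (by exact hKJ) ⟨j0.1, hKne⟩)
    exact absurd (hJmin _ hsub) (by omega)
  have hcard : J.card ≤ t := by
    have h1 := hindep.fintype_card_le_finrank
    simpa using h1
  refine ⟨J, hJfrac, hcard, fun i => ?_⟩
  have key : ∀ (b : ℤ) (c : ℝ), (b : ℝ) = 2 * c → (b : ZMod 2) = 0 →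
      ∃ m : ℤ, ∑ k, (π i k : ℝ) * (if k ∈ J then c else x k) = (m : ℝ) := by
    intro b c hbc hb
    set y : Fin n → ℤ := fun k =>
      if k ∈ J then b else (if x k = 1 then 2 else if x k = 1 / 2 then 1 else 0) with hy
    have h2 : ∀ k, 2 * (if k ∈ J then c else x k) = (y k : ℝ) := by
      intro k
      by_cases hk : k ∈ J
      · simp [hy, hk, ← hbc]
      · rcases hhalf k with h | h | h <;> simp [hy, hk, h] <;> norm_num
    have hyk : ∀ k, (y k : ZMod 2) = if k ∈ E \ J then 1 else 0 := by
      intro k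
      by_cases hk : k ∈ J
      · have hkE : k ∉ E \ J := fun hc => (Finset.mem_sdiff.mp hc).2 hk
        rw [if_neg hkE]
        simp only [hy]
        rw [if_pos hk]
        exact hb
      · simp only [hy]
        rw [if_neg hk]
        rcases hhalf k with h | h | h
        · have h1 : ¬ x k = 1 := by rw [h]; norm_num
          have h2' : ¬ x k = 1 / 2 := by rw [h]; norm_num
          have hkE : k ∉ E \ J := fun hc => by
            have hm := (Finset.mem_sdiff.mp hc).1
            rw [hE, Finset.mem_filter] at hm
            exact h2' hm.2
          rw [if_neg h1, if_neg h2', if_neg hkE]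
          decide
        · have h1 : ¬ x k = 1 := by rw [h]; norm_num
          have hkE : k ∈ E \ J := Finset.mem_sdiff.mpr
            ⟨by rw [hE, Finset.mem_filter]; exact ⟨Finset.mem_univ _, h⟩, hk⟩
          rw [if_neg h1, if_pos h, if_pos hkE]
          decide
        · have hkE : k ∉ E \ J := fun hc => by
            have hm := (Finset.mem_sdiff.mp hc).1
            rw [hE, Finset.mem_filter] at hm
            rw [h] at hm
            norm_num at hm
          rw [if_pos h, if_neg hkE]
          decide
    set N : ℤ := ∑ k, π i k * y k with hN
    have hNpar : (N : ZMod 2) = 0 := by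
      have step1 : (N : ZMod 2) = ∑ k ∈ E \ J, v k i := by
        rw [hN]
        push_cast
        rw [Finset.sum_congr rfl (fun k _ => by rw [hyk k, mul_ite, mul_one, mul_zero])]
        rw [Finset.sum_ite_mem, Finset.univ_inter]
      have step2 : ∑ k ∈ E \ J, v k = 0 := by
        have := Finset.sum_sdiff hJE (f := v)
        rw [hJsum] at this
        rw [← hw] at this
        have h0 : ∑ k ∈ E \ J, v k + w = w := this
        simpa using h0
      rw [step1]
      have := congrFun step2 i
      simpa [Finset.sum_apply] using this
    have hdvd : (2 : ℤ) ∣ N := by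
      have := (ZMod.intCast_zmod_eq_zero_iff_dvd N 2).mp hNpar
      exact_mod_cast this
    obtain ⟨m, hm⟩ := hdvd
    refine ⟨m, ?_⟩
    have h2S : 2 * ∑ k, (π i k : ℝ) * (if k ∈ J then c else x k) = (N : ℝ) := by
      rw [Finset.mul_sum, hN]
      push_cast
      apply Finset.sum_congr rfl
      intro k _
      rw [← h2 k]
      ring
    have hmR : (N : ℝ) = 2 * (m : ℝ) := by exact_mod_cast congrArg Int.cast hm
    linarith
  exact ⟨key 0 0 (by norm_num) (by decide), key 2 1 (by norm_num) (by decide)⟩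
end

section
/- Let t ≥ 1, let P ⊆ [0,1]^n be a polytope, and let x ∈ {0,1/2,1}^n with |E(x)| ≥ t. Suppose that for every J ⊆ E(x) with |J| ≤ t, both x^(J,0) and x^(J,1) lie in P. Then x lies in the t-dimensional lattice closure tLC(P). -/
/-- The `t`-dimensional lattice closure of a set `P ⊆ ℝⁿ`. -/
def tDimLatticeClosure (t n : ℕ) (P : Set (Fin n → ℝ)) : Set (Fin n → ℝ) :=
  ⋂ (π : Fin t → Fin n → ℤ),
    convexHull ℝ (⋂ j : Fin t, {x ∈ P | ∃ m : ℤ, ∑ i, (π j i : ℝ) * x i = (m : ℝ)})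

theorem stmt_11 (t n : ℕ) (ht : 1 ≤ t) (P : Set (Fin n → ℝ))
    (hconv : Convex ℝ P)
    (hcube : P ⊆ Set.Icc (fun _ => (0 : ℝ)) (fun _ => (1 : ℝ)))
    (x : Fin n → ℝ) (hhalf : ∀ i, x i = 0 ∨ x i = 1 / 2 ∨ x i = 1)
    (hfrac : t ≤ (Finset.univ.filter fun i => x i = 1 / 2).card)
    (hround : ∀ J : Finset (Fin n), (∀ j ∈ J, x j = 1 / 2) → J.card ≤ t →
      (fun i => if i ∈ J then (0 : ℝ) else x i) ∈ P ∧
      (fun i => if i ∈ J then (1 : ℝ) else x i) ∈ P) :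
    x ∈ tDimLatticeClosure t n P := by
  classical
  rw [tDimLatticeClosure, Set.mem_iInter]
  intro π
  set E : Finset (Fin n) := Finset.univ.filter (fun i => x i = 1/2) with hEdef
  set S : Finset (Finset (Fin n)) :=
    E.powerset.filter (fun J => ∀ j, ((∑ i ∈ E \ J, π j i : ℤ) : ZMod 2) = 0) with hSdef
  have hES : E ∈ S := by
    simp [hSdef]
  obtain ⟨J, hJS, hJmin⟩ := S.exists_min_image Finset.card ⟨E, hES⟩
  rw [hSdef, Finset.mem_filter, Finset.mem_powerset] at hJS
  obtain ⟨hJE, hJQ⟩ := hJS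
  -- card bound
  have hJt : J.card ≤ t := by
    by_contra hcard
    push_neg at hcard
    have hnli : ¬ LinearIndependent (ZMod 2)
        (fun i : J => (fun j => ((π j i : ZMod 2)) : Fin t → ZMod 2)) := by
      intro h
      have h1 := h.fintype_card_le_finrank
      rw [Fintype.card_coe] at h1
      have h2 : Module.finrank (ZMod 2) (Fin t → ZMod 2) = t := by
        simp
      omega
    rw [Fintype.not_linearIndependent_iff] at hnli
    obtain ⟨g, hgsum, i0, hgi0⟩ := hnli
    set K : Finset (Fin n) := (Finset.univ.filter (fun i : J => g i ≠ 0)).image Subtype.val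
      with hKdef
    have hKJ : K ⊆ J := by
      intro i hi
      rw [hKdef, Finset.mem_image] at hi
      obtain ⟨a, _, rfl⟩ := hi
      exact a.2
    have hKne : K.Nonempty := ⟨i0, by simp [hKdef, hgi0]⟩
    have hone : ∀ a : ZMod 2, a ≠ 0 → a = 1 := by decide
    have hKsum : ∀ j, ∑ i ∈ K, ((π j i : ZMod 2)) = 0 := by
      intro j
      have h3 := congrFun hgsum j
      rw [Finset.sum_apply] at h3
      simp only [Pi.smul_apply, smul_eq_mul, Pi.zero_apply] at h3
      have h4 : ∑ i ∈ K, ((π j i : ZMod 2))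
          = ∑ i ∈ Finset.univ.filter (fun i : J => g i ≠ 0), ((π j i : ZMod 2)) := by
        rw [hKdef]
        exact Finset.sum_image (by intro a _ b _ h; exact Subtype.val_injective h)
      rw [h4]
      calc ∑ i ∈ Finset.univ.filter (fun i : J => g i ≠ 0), ((π j i : ZMod 2))
          = ∑ i ∈ Finset.univ.filter (fun i : J => g i ≠ 0), g i * ((π j i : ZMod 2)) := by
            apply Finset.sum_congr rfl
            intro i hi
            rw [hone (g i) (Finset.mem_filter.mp hi).2, one_mul]
        _ = ∑ i : J, g i * ((π j i : ZMod 2)) := by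
            apply Finset.sum_filter_of_ne
            intro i _ hne
            intro h0
            exact hne (by rw [h0, zero_mul])
        _ = 0 := h3
    have hdisj : Disjoint (E \ J) K := by
      rw [Finset.disjoint_left]
      intro i hi hiK
      exact (Finset.mem_sdiff.mp hi).2 (hKJ hiK)
    have hJKS : J \ K ∈ S := by
      rw [hSdef, Finset.mem_filter, Finset.mem_powerset]
      refine ⟨(Finset.sdiff_subset).trans hJE, ?_⟩
      intro j
      have hsplit : E \ (J \ K) = (E \ J) ∪ K := by
        ext i
        simp only [Finset.mem_sdiff, Finset.mem_union]
        constructor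
        · rintro ⟨hiE, hi⟩
          by_cases hiJ : i ∈ J
          · right
            by_contra hiK
            exact hi ⟨hiJ, hiK⟩
          · exact Or.inl ⟨hiE, hiJ⟩
        · rintro (⟨hiE, hiJ⟩ | hiK)
          · exact ⟨hiE, fun h => hiJ h.1⟩
          · exact ⟨hJE (hKJ hiK), fun h => h.2 hiK⟩
      rw [hsplit, Finset.sum_union hdisj]
      push_cast
      have := hJQ j
      push_cast at this
      rw [this, hKsum j, add_zero]
    have hlt : (J \ K).card < J.card :=
      Finset.card_lt_card (Finset.sdiff_ssubset hKJ hKne)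
    have := hJmin (J \ K) hJKS
    omega
  -- the two rounded points
  have hxJ : ∀ j ∈ J, x j = 1 / 2 := by
    intro j hj
    have := hJE hj
    rw [hEdef, Finset.mem_filter] at this
    exact this.2
  obtain ⟨hy0P, hy1P⟩ := hround J hxJ hJt
  set y0 : Fin n → ℝ := fun i => if i ∈ J then (0 : ℝ) else x i with hy0def
  set y1 : Fin n → ℝ := fun i => if i ∈ J then (1 : ℝ) else x i with hy1def
  -- generic sum computation
  have key : ∀ (j : Fin t) (c : ℝ),
      ∑ i, (π j i : ℝ) * (if i ∈ J then c else x i)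
        = c * (∑ i ∈ J, (π j i : ℝ)) + (1/2) * (∑ i ∈ E \ J, (π j i : ℝ))
          + ∑ i ∈ Finset.univ.filter (fun i => ¬ x i = 1/2), (π j i : ℝ) * x i := by
    intro j c
    rw [← Finset.sum_filter_add_sum_filter_not Finset.univ (fun i => x i = 1/2)
      (fun i => (π j i : ℝ) * (if i ∈ J then c else x i))]
    congr 1
    · have hcongr : ∀ i ∈ E, (π j i : ℝ) * (if i ∈ J then c else x i)
          = (if i ∈ J then (π j i : ℝ) * c else (π j i : ℝ) * (1/2)) := by
        intro i hi
        rw [hEdef, Finset.mem_filter] at hi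
        split_ifs
        · rfl
        · rw [hi.2]
      rw [show (Finset.univ.filter (fun i => x i = 1/2)) = E from rfl,
        Finset.sum_congr rfl hcongr, Finset.sum_ite]
      congr 1
      · rw [show E.filter (fun i => i ∈ J) = J by
          ext i; simp only [Finset.mem_filter]
          exact ⟨fun h => h.2, fun h => ⟨hJE h, h⟩⟩]
        rw [Finset.mul_sum]
        exact Finset.sum_congr rfl (fun i _ => mul_comm _ _)
      · rw [show E.filter (fun i => ¬ i ∈ J) = E \ J from (Finset.sdiff_eq_filter E J).symm]
        rw [Finset.mul_sum]
        exact Finset.sum_congr rfl (fun i _ => mul_comm _ _)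
    · apply Finset.sum_congr rfl
      intro i hi
      rw [Finset.mem_filter] at hi
      rw [if_neg (fun h => hi.2 (hxJ i h))]
  -- integer values on the complement of E
  set M : Fin t → ℤ := fun j =>
    ∑ i ∈ Finset.univ.filter (fun i => ¬ x i = 1/2), π j i * (if x i = 1 then 1 else 0)
    with hMdef
  have hMcast : ∀ j, ∑ i ∈ Finset.univ.filter (fun i => ¬ x i = 1/2), (π j i : ℝ) * x i
      = (M j : ℝ) := by
    intro j
    rw [hMdef]
    push_cast
    apply Finset.sum_congr rfl
    intro i hi
    rw [Finset.mem_filter] at hi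
    rcases hhalf i with h | h | h
    · simp [h]
    · exact absurd h hi.2
    · simp [h]
  -- the half sums are integers
  have hhalfint : ∀ j, ∃ k : ℤ, (1/2 : ℝ) * (∑ i ∈ E \ J, (π j i : ℝ)) = (k : ℝ) := by
    intro j
    obtain ⟨k, hk⟩ := (ZMod.intCast_zmod_eq_zero_iff_dvd _ 2).mp (hJQ j)
    refine ⟨k, ?_⟩
    have : (∑ i ∈ E \ J, (π j i : ℝ)) = ((∑ i ∈ E \ J, π j i : ℤ) : ℝ) := by push_cast; rfl
    rw [this, hk]
    push_cast
    ring
  have hy0m : ∀ j, ∃ m : ℤ, ∑ i, (π j i : ℝ) * y0 i = (m : ℝ) := by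
    intro j
    obtain ⟨k, hk⟩ := hhalfint j
    refine ⟨k + M j, ?_⟩
    rw [hy0def]
    rw [key j 0]
    rw [hk, hMcast j]
    push_cast
    ring
  have hy1m : ∀ j, ∃ m : ℤ, ∑ i, (π j i : ℝ) * y1 i = (m : ℝ) := by
    intro j
    obtain ⟨k, hk⟩ := hhalfint j
    refine ⟨(∑ i ∈ J, π j i) + k + M j, ?_⟩
    rw [hy1def]
    rw [key j 1]
    rw [hk, hMcast j]
    push_cast
    ring
  set A : Set (Fin n → ℝ) :=
    ⋂ j : Fin t, {y ∈ P | ∃ m : ℤ, ∑ i, (π j i : ℝ) * y i = (m : ℝ)} with hAdef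
  have hy0A : y0 ∈ A := Set.mem_iInter.mpr fun j => ⟨hy0P, hy0m j⟩
  have hy1A : y1 ∈ A := Set.mem_iInter.mpr fun j => ⟨hy1P, hy1m j⟩
  have hx : x = (1/2 : ℝ) • y0 + (1/2 : ℝ) • y1 := by
    funext i
    by_cases hi : i ∈ J
    · simp only [Pi.add_apply, Pi.smul_apply, smul_eq_mul, hy0def, hy1def, if_pos hi]
      rw [hxJ i hi]
      norm_num
    · simp only [Pi.add_apply, Pi.smul_apply, smul_eq_mul, hy0def, hy1def, if_neg hi]
      ring
  rw [hx]
  exact (convex_convexHull ℝ A) (subset_convexHull ℝ A hy0A) (subset_convexHull ℝ A hy1A)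
    (by norm_num) (by norm_num) (by norm_num)
end

section
/- Let P ⊆ [0,1]^n be the n-dimensional cropped cube. Then the point x with all coordinates equal to 1/2 lies in tLC^k(P) whenever k·t + 1 ≤ n; more precisely, every x ∈ {0,1/2,1}^n with |E(x)| ≥ k·t + 1 lies in tLC^k(P). Consequently, the t-dimensional lattice rank of P is at least ⌈n/t⌉. -/
/-- The `n`-dimensional cropped cube. -/
def croppedCube (n : ℕ) : Set (Fin n → ℝ) :=
  {x | (∀ i, 0 ≤ x i ∧ x i ≤ 1) ∧
    ∀ J : Finset (Fin n), (1 / 2 : ℝ) ≤ ∑ i ∈ J, x i + ∑ i ∈ Jᶜ, (1 - x i)}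


lemma zmod2_cases : ∀ a : ZMod 2, a = 0 ∨ a = 1 := by decide

lemma zmod2_sub : ∀ a b : ZMod 2, a - b = a + b := by decide

lemma small_support_solution {n t : ℕ} (A : Fin n → Fin t → ZMod 2)
    (E : Finset (Fin n)) (w₀ : Fin n → ZMod 2)
    (hw₀s : ∀ i, w₀ i ≠ 0 → i ∈ E) :
    ∃ w : Fin n → ZMod 2, (∀ i, w i ≠ 0 → i ∈ E) ∧
      (Finset.univ.filter fun i => w i ≠ 0).card ≤ t ∧
      ∑ i, w i • A i = ∑ i, w₀ i • A i := by
  set b := ∑ i, w₀ i • A i with hb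
  suffices H : ∀ m : ℕ, ∀ w₀ : Fin n → ZMod 2, (∀ i, w₀ i ≠ 0 → i ∈ E) →
      (Finset.univ.filter fun i => w₀ i ≠ 0).card ≤ m →
      (∑ i, w₀ i • A i = b) →
      ∃ w : Fin n → ZMod 2, (∀ i, w i ≠ 0 → i ∈ E) ∧
        (Finset.univ.filter fun i => w i ≠ 0).card ≤ t ∧ ∑ i, w i • A i = b by
    exact H _ w₀ hw₀s le_rfl rfl
  intro m
  induction m with
  | zero => intro w hs hc hsum
            exact ⟨w, hs, le_trans (le_trans hc (Nat.zero_le 0)) (Nat.zero_le t), hsum⟩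
  | succ m ih =>
    intro w hs hc hsum
    by_cases hle : (Finset.univ.filter fun i => w i ≠ 0).card ≤ t
    · exact ⟨w, hs, hle, hsum⟩
    push_neg at hle
    set S := Finset.univ.filter fun i => w i ≠ 0 with hS
    -- the columns indexed by S are linearly dependent
    have hdep : ¬ LinearIndependent (ZMod 2) (fun i : ↥S => A i) := by
      intro hli
      have h1 : Fintype.card ↥S ≤ Module.finrank (ZMod 2) (Fin t → ZMod 2) :=
        hli.fintype_card_le_finrank
      rw [Module.finrank_fin_fun, Fintype.card_coe] at h1
      omega
    rw [Fintype.not_linearIndependent_iff] at hdep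
    obtain ⟨g, hg0, i₀, hgi₀⟩ := hdep
    set c : Fin n → ZMod 2 := fun i => if h : i ∈ S then g ⟨i, h⟩ else 0 with hcdef
    have hcsum : ∑ i, c i • A i = 0 := by
      rw [← Finset.sum_subset (Finset.subset_univ S)
        (fun i _ hi => by simp [hcdef, dif_neg hi])]
      rw [← Finset.sum_coe_sort S (fun i => c i • A i)]
      rw [← hg0]
      exact Finset.sum_congr rfl fun i _ => by simp [hcdef, i.2]
    set w' : Fin n → ZMod 2 := fun i => w i + c i with hw'
    have hw'supp : ∀ i, w' i ≠ 0 → w i ≠ 0 ∧ c i = 0 := by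
      intro i hi
      by_cases hcz : c i = 0
      · refine ⟨fun h0 => hi ?_, hcz⟩
        simp [hw', h0, hcz]
      · exfalso
        have hiS : i ∈ S := by
          by_contra hiS; exact hcz (by simp [hcdef, dif_neg hiS])
        have hw1 : w i = 1 := (zmod2_cases (w i)).resolve_left (by simp [hS] at hiS; exact hiS)
        have hc1 : c i = 1 := (zmod2_cases (c i)).resolve_left hcz
        exact hi (by simp [hw', hw1, hc1]; decide)
    have hssub : (Finset.univ.filter fun i => w' i ≠ 0) ⊂ S := by
      constructor
      · intro i hi
        rw [Finset.mem_filter] at hi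
        rw [hS, Finset.mem_filter]
        exact ⟨Finset.mem_univ i, (hw'supp i hi.2).1⟩
      · intro hsub
        have hi₀S : (i₀ : Fin n) ∈ S := i₀.2
        have hci₀ : c (i₀ : Fin n) = 1 := by
          rcases zmod2_cases (c (i₀ : Fin n)) with h | h
          · exfalso; apply hgi₀
            have : c (i₀ : Fin n) = g i₀ := by simp [hcdef, i₀.2]
            rw [this] at h; exact h
          · exact h
        have hw1 : w (i₀ : Fin n) = 1 := by
          have h2 : w (i₀ : Fin n) ≠ 0 := by
            have h3 : (i₀ : Fin n) ∈ Finset.univ.filter fun i => w i ≠ 0 := by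
              rw [← hS]; exact i₀.2
            exact (Finset.mem_filter.mp h3).2
          exact (zmod2_cases _).resolve_left h2
        have hw'0 : w' (i₀ : Fin n) = 0 := by simp [hw', hw1, hci₀]; decide
        have := hsub hi₀S
        rw [Finset.mem_filter] at this
        exact this.2 hw'0
    have hcard : (Finset.univ.filter fun i => w' i ≠ 0).card ≤ m := by
      have := Finset.card_lt_card hssub
      omega
    refine ih w' (fun i hi => hs i (hw'supp i hi).1) hcard ?_
    rw [← hsum]
    have : ∀ i, w' i • A i = w i • A i + c i • A i := by
      intro i; rw [hw']; exact add_smul _ _ _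
    rw [Finset.sum_congr rfl fun i _ => this i, Finset.sum_add_distrib, hcsum, add_zero]

lemma mem_croppedCube_of_half {n : ℕ} (x : Fin n → ℝ)
    (hx : ∀ i, x i = 0 ∨ x i = 1 / 2 ∨ x i = 1)
    (i₀ : Fin n) (h₀ : x i₀ = 1 / 2) : x ∈ croppedCube n := by
  have hbd : ∀ i, 0 ≤ x i ∧ x i ≤ 1 := by
    intro i; rcases hx i with h | h | h <;> rw [h] <;> norm_num
  refine ⟨hbd, fun J => ?_⟩
  have h1 : (0:ℝ) ≤ ∑ i ∈ J, x i := Finset.sum_nonneg fun i _ => (hbd i).1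
  have h2 : (0:ℝ) ≤ ∑ i ∈ Jᶜ, (1 - x i) :=
    Finset.sum_nonneg fun i _ => by linarith [(hbd i).2]
  by_cases hJ : i₀ ∈ J
  · have : x i₀ ≤ ∑ i ∈ J, x i :=
      Finset.single_le_sum (fun i _ => (hbd i).1) hJ
    rw [h₀] at this; linarith
  · have hJc : i₀ ∈ Jᶜ := Finset.mem_compl.mpr hJ
    have : 1 - x i₀ ≤ ∑ i ∈ Jᶜ, (1 - x i) :=
      Finset.single_le_sum (f := fun i => 1 - x i) (fun i _ => show (0:ℝ) ≤ 1 - x i by linarith [(hbd i).2]) hJc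
    rw [h₀] at this; linarith

lemma zmod2_neg : ∀ a : ZMod 2, -a = a := by decide
lemma zmod2_add_self : ∀ a : ZMod 2, a + a = 0 := by decide

lemma key (t n : ℕ) (ht : 1 ≤ t)
    (ssol : ∀ (A : Fin n → Fin t → ZMod 2) (E : Finset (Fin n)) (w₀ : Fin n → ZMod 2),
      (∀ i, w₀ i ≠ 0 → i ∈ E) →
      ∃ w : Fin n → ZMod 2, (∀ i, w i ≠ 0 → i ∈ E) ∧
        (Finset.univ.filter fun i => w i ≠ 0).card ≤ t ∧
        ∑ i, w i • A i = ∑ i, w₀ i • A i) :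
    ∀ k : ℕ, ∀ x : Fin n → ℝ,
    (∀ i, x i = 0 ∨ x i = 1 / 2 ∨ x i = 1) →
    k * t + 1 ≤ (Finset.univ.filter fun i => x i = 1 / 2).card →
    x ∈ (tDimLatticeClosure t n)^[k] (croppedCube n) := by
  intro k
  induction k with
  | zero =>
    intro x hx hcard
    rw [Function.iterate_zero_apply]
    have hne : (Finset.univ.filter fun i => x i = 1/2).Nonempty :=
      Finset.card_pos.mp (by omega)
    obtain ⟨i₀, hi₀⟩ := hne
    exact mem_croppedCube_of_half x hx i₀ (Finset.mem_filter.mp hi₀).2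
  | succ k ih =>
    intro x hx hcard
    rw [Function.iterate_succ_apply']
    set Q := (tDimLatticeClosure t n)^[k] (croppedCube n) with hQ
    simp only [tDimLatticeClosure, Set.mem_iInter]
    intro π
    set E := Finset.univ.filter fun i => x i = 1/2 with hE
    set z : Fin n → ℤ := fun i => if x i = 0 then 0 else if x i = 1/2 then 1 else 2 with hz
    have hzx : ∀ i, (z i : ℝ) = 2 * x i := by
      intro i
      rcases hx i with h | h | h <;> simp [hz, h] <;> norm_num
    set A : Fin n → Fin t → ZMod 2 := fun i j => ((π j i : ℤ) : ZMod 2) with hA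
    set w₀ : Fin n → ZMod 2 := fun i => ((z i : ℤ) : ZMod 2) with hw₀
    have hw₀E : ∀ i, w₀ i ≠ 0 → i ∈ E := by
      intro i hi
      rcases hx i with h | h | h
      · exfalso; apply hi; simp [hw₀, hz, h]
      · simp [hE, h]
      · exfalso; apply hi
        have hne : x i ≠ 0 := by rw [h]; norm_num
        have hne2 : x i ≠ 1/2 := by rw [h]; norm_num
        have hzi : z i = 2 := by
          simp only [hz]
          rw [if_neg hne, if_neg hne2]
        simp only [hw₀, hzi]
        decide
    obtain ⟨w, hwE, hwcard, hwsum⟩ := ssol A E w₀ hw₀E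
    set u : Fin n → ℤ := fun i => if w i = 0 then 0 else 1 with hu
    have huw : ∀ i, ((u i : ℤ) : ZMod 2) = w i := by
      intro i
      rcases zmod2_cases (w i) with h | h <;> simp [hu, h]
    have main : ∀ v : Fin n → ℤ, (∀ i, v i = u i ∨ v i = -u i) →
        (fun i => x i + (v i : ℝ)/2) ∈
          ⋂ j : Fin t, {y ∈ Q | ∃ m : ℤ, ∑ i, (π j i : ℝ) * y i = (m : ℝ)} := by
      intro v hv
      set y : Fin n → ℝ := fun i => x i + (v i : ℝ)/2 with hy
      have hvw : ∀ i, ((v i : ℤ) : ZMod 2) = w i := by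
        intro i
        rcases hv i with h | h <;> rw [h]
        · exact huw i
        · push_cast
          rw [zmod2_neg]
          exact huw i
      have hvne : ∀ i, v i ≠ 0 → (x i = 1/2 ∧ w i ≠ 0 ∧ (v i = 1 ∨ v i = -1)) := by
        intro i hi
        have hune : u i ≠ 0 := by
          intro h0
          rcases hv i with h | h <;> rw [h, h0] at hi <;> simp at hi
        have hwne : w i ≠ 0 := by
          intro h0; exact hune (by simp [hu, h0])
        have hu1 : u i = 1 := by simp [hu, hwne]
        have hiE := hwE i hwne
        rw [hE, Finset.mem_filter] at hiE
        refine ⟨hiE.2, hwne, ?_⟩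
        rcases hv i with h | h <;> rw [h, hu1] <;> simp
      -- values of y
      have hyvals : ∀ i, y i = 0 ∨ y i = 1/2 ∨ y i = 1 := by
        intro i
        by_cases h0 : v i = 0
        · simp only [hy, h0]; push_cast; simpa using hx i
        · obtain ⟨hx2, -, h1⟩ := hvne i h0
          rcases h1 with h | h
          · right; right
            show x i + ((v i : ℤ) : ℝ)/2 = 1
            rw [h, hx2]; norm_num
          · left
            show x i + ((v i : ℤ) : ℝ)/2 = 0
            rw [h, hx2]; norm_num
      -- cardinality of half coords of y
      have hycard : k * t + 1 ≤ (Finset.univ.filter fun i => y i = 1/2).card := by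
        have hsub : E \ (Finset.univ.filter fun i => w i ≠ 0) ⊆
            Finset.univ.filter fun i => y i = 1/2 := by
          intro i hi
          rw [Finset.mem_sdiff] at hi
          obtain ⟨hiE, hiW⟩ := hi
          have hw0 : w i = 0 := by
            by_contra hne; exact hiW (by simp [hne])
          have hv0 : v i = 0 := by
            have hu0 : u i = 0 := by simp [hu, hw0]
            rcases hv i with h | h <;> rw [h, hu0] <;> ring
          rw [hE, Finset.mem_filter] at hiE
          simp [hy, hv0, hiE.2]
        have h1 := Finset.card_le_card hsub
        have h2 := Finset.le_card_sdiff (Finset.univ.filter fun i => w i ≠ 0) E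
        have hmul : (k + 1) * t = k * t + t := by ring
        omega
      have hyQ : y ∈ Q := ih y hyvals hycard
      refine Set.mem_iInter.mpr fun j => ⟨hyQ, ?_⟩
      -- integrality
      set N : ℤ := ∑ i, π j i * (z i + v i) with hN
      have hNcast : ((N : ℤ) : ZMod 2) = 0 := by
        have h1 : ((N : ℤ) : ZMod 2) = ∑ i, ((π j i : ℤ) : ZMod 2) * (w₀ i + w i) := by
          rw [hN]; push_cast
          refine Finset.sum_congr rfl fun i _ => ?_
          rw [hvw i]
        have h2 := congrFun hwsum j
        rw [Finset.sum_apply, Finset.sum_apply] at h2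
        simp only [Pi.smul_apply, smul_eq_mul] at h2
        rw [h1]
        have h3 : ∑ i, ((π j i : ℤ) : ZMod 2) * (w₀ i + w i)
            = (∑ i, w₀ i * A i j) + ∑ i, w i * A i j := by
          rw [← Finset.sum_add_distrib]
          refine Finset.sum_congr rfl fun i _ => ?_
          rw [hA]; ring
        rw [h3, ← h2, zmod2_add_self]
      have hdvd : (2 : ℤ) ∣ N := by
        have := (ZMod.intCast_zmod_eq_zero_iff_dvd N 2).mp hNcast
        exact_mod_cast this
      obtain ⟨m, hm⟩ := hdvd
      refine ⟨m, ?_⟩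
      have hsum : ∑ i, (π j i : ℝ) * y i = (N : ℝ) / 2 := by
        rw [hN]
        push_cast
        rw [Finset.sum_div]
        refine Finset.sum_congr rfl fun i _ => ?_
        simp only [hy]
        rw [hzx i]
        ring
      rw [hsum, hm]
      push_cast
      ring
    have hyp := main u (fun i => Or.inl rfl)
    have hym := main (fun i => -(u i)) (fun i => Or.inr rfl)
    set S := ⋂ j : Fin t, {y ∈ Q | ∃ m : ℤ, ∑ i, (π j i : ℝ) * y i = (m : ℝ)} with hS
    have hconv := (convex_convexHull ℝ S)
      (subset_convexHull ℝ S hyp) (subset_convexHull ℝ S hym)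
      (by norm_num : (0:ℝ) ≤ 1/2) (by norm_num : (0:ℝ) ≤ 1/2) (by norm_num : (1/2:ℝ) + 1/2 = 1)
    have hxeq : x = (1/2 : ℝ) • (fun i => x i + (u i : ℝ)/2)
        + (1/2 : ℝ) • (fun i => x i + ((-(u i) : ℤ) : ℝ)/2) := by
      funext i
      simp only [Pi.add_apply, Pi.smul_apply, smul_eq_mul]
      push_cast
      ring
    rw [hxeq]
    exact hconv

theorem stmt_12 (t n : ℕ) (ht : 1 ≤ t) :
    (∀ k : ℕ, ∀ x : Fin n → ℝ, (∀ i, x i = 0 ∨ x i = 1 / 2 ∨ x i = 1) →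
        k * t + 1 ≤ (Finset.univ.filter fun i => x i = 1 / 2).card →
        x ∈ (tDimLatticeClosure t n)^[k] (croppedCube n)) ∧
    (∀ k : ℕ, k < ⌈(n : ℚ) / t⌉.toNat →
        (fun _ : Fin n => (1 / 2 : ℝ)) ∈ (tDimLatticeClosure t n)^[k] (croppedCube n)) := by
  have hkey := key t n ht (fun A E w₀ h => small_support_solution A E w₀ h)
  refine ⟨hkey, ?_⟩
  intro k hk
  have h1 : (k : ℤ) < ⌈(n : ℚ) / t⌉ := Int.lt_toNat.mp hk
  have h2 : (k : ℚ) < (n : ℚ) / t := by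
    by_contra hle
    push_neg at hle
    have : ⌈(n : ℚ) / t⌉ ≤ (k : ℤ) := Int.ceil_le.mpr (by exact_mod_cast hle)
    omega
  have ht' : (0 : ℚ) < (t : ℚ) := by exact_mod_cast ht
  have h3 : (k : ℚ) * t < n := (lt_div_iff₀ ht').mp h2
  have h4 : k * t < n := by exact_mod_cast h3
  have hfilt : (Finset.univ.filter fun i : Fin n => (fun _ : Fin n => (1/2:ℝ)) i = 1/2)
      = Finset.univ := Finset.filter_true_of_mem fun i _ => rfl
  refine hkey k (fun _ : Fin n => (1/2:ℝ)) (fun i => Or.inr (Or.inl rfl)) ?_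
  rw [hfilt, Finset.card_univ, Fintype.card_fin]
  omega
end

section
/- Let G = (V,E) be a graph and x ∈ {0,1/2,1}^E a half-integral point. Suppose (i) every vertex incident to at least one 1/2-edge is incident to at least two 1/2-edges, and (ii) every vertex incident to no 1/2-edge is incident to an odd number of 1-edges. Then x belongs to the Tseitin polytope P_TS(G). -/
/-- The Tseitin polytope of a graph `G`, with variables indexed by unordered pairs. -/
def TseitinPolytope {V : Type*} [Fintype V] [DecidableEq V] (G : SimpleGraph V)
    [DecidableRel G.Adj] : Set (Sym2 V → ℝ) :=
  {x | (∀ e, 0 ≤ x e ∧ x e ≤ 1) ∧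
    ∀ u : V, ∀ F ⊆ G.neighborFinset u, Even F.card →
      1 ≤ ∑ v ∈ G.neighborFinset u \ F, x s(u, v) + ∑ v ∈ F, (1 - x s(u, v))}

theorem stmt_16 {V : Type*} [Fintype V] [DecidableEq V] (G : SimpleGraph V)
    [DecidableRel G.Adj] (x : Sym2 V → ℝ)
    (hhalf : ∀ e, x e = 0 ∨ x e = 1 / 2 ∨ x e = 1)
    (h1 : ∀ u : V, (∃ v ∈ G.neighborFinset u, x s(u, v) = 1 / 2) →
      2 ≤ ((G.neighborFinset u).filter fun v => x s(u, v) = 1 / 2).card)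
    (h2 : ∀ u : V, (∀ v ∈ G.neighborFinset u, x s(u, v) ≠ 1 / 2) →
      Odd ((G.neighborFinset u).filter fun v => x s(u, v) = 1).card) :
    x ∈ TseitinPolytope G := by
  have hx0 : ∀ e, 0 ≤ x e := by
    intro e; rcases hhalf e with h | h | h <;> rw [h] <;> norm_num
  have hx1 : ∀ e, x e ≤ 1 := by
    intro e; rcases hhalf e with h | h | h <;> rw [h] <;> norm_num
  refine ⟨fun e => ⟨hx0 e, hx1 e⟩, ?_⟩
  intro u F hF hFeven
  set N := G.neighborFinset u with hN
  set f : V → ℝ := fun v => if v ∈ F then 1 - x s(u, v) else x s(u, v) with hf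
  have hsum : ∑ v ∈ N \ F, x s(u, v) + ∑ v ∈ F, (1 - x s(u, v)) = ∑ v ∈ N, f v := by
    rw [← Finset.sum_sdiff hF]
    congr 1
    · exact Finset.sum_congr rfl fun v hv => by
        simp [hf, (Finset.mem_sdiff.mp hv).2]
    · exact Finset.sum_congr rfl fun v hv => by simp [hf, hv]
  rw [hsum]
  have hfnn : ∀ v ∈ N, 0 ≤ f v := by
    intro v _
    by_cases h : v ∈ F <;> simp [hf, h, hx0, hx1]
  by_cases hc : ∃ v ∈ N, x s(u, v) = 1 / 2
  · -- two half-edges at u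
    have h2' := h1 u hc
    obtain ⟨a, ha, b, hb, hab⟩ := Finset.one_lt_card.mp h2'
    rw [Finset.mem_filter] at ha hb
    have hhalfval : ∀ v, x s(u, v) = 1 / 2 → f v = 1 / 2 := by
      intro v hv
      by_cases h : v ∈ F <;> simp [hf, h, hv] <;> norm_num
    have hsub : ({a, b} : Finset V) ⊆ N := by
      intro v hv
      rcases Finset.mem_insert.mp hv with h | h
      · exact h ▸ ha.1
      · exact (Finset.mem_singleton.mp h) ▸ hb.1
    calc (1 : ℝ) = ∑ v ∈ ({a, b} : Finset V), f v := by
          rw [Finset.sum_pair hab, hhalfval a ha.2, hhalfval b hb.2]; norm_num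
      _ ≤ ∑ v ∈ N, f v :=
          Finset.sum_le_sum_of_subset_of_nonneg hsub (fun v hv _ => hfnn v hv)
  · -- no half-edges at u
    push_neg at hc
    have hodd := h2 u hc
    have hex : ∃ v ∈ N, f v = 1 := by
      by_contra hnone
      push_neg at hnone
      have hSF : (N.filter fun v => x s(u, v) = 1) = F := by
        ext v
        simp only [Finset.mem_filter]
        constructor
        · rintro ⟨hvN, hv1⟩
          by_contra hvF
          have := hnone v hvN
          simp [hf, hvF, hv1] at this
        · intro hvF
          have hvN := hF hvF
          refine ⟨hvN, ?_⟩
          rcases hhalf s(u, v) with h | h | h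
          · have := hnone v hvN
            simp [hf, hvF, h] at this
          · exact absurd h (hc v hvN)
          · exact h
      rw [hSF] at hodd
      exact (Nat.not_even_iff_odd.mpr hodd) hFeven
    obtain ⟨v₀, hv₀, hfv₀⟩ := hex
    calc (1 : ℝ) = f v₀ := hfv₀.symm
      _ ≤ ∑ v ∈ N, f v := Finset.single_le_sum hfnn hv₀
end

section
/- Let G = (V,E) be a graph and U ⊆ V with |U| ≤ |V|/2. Assume that for every nonempty X ⊆ U, the number of edges between X and V∖X is positive. Then for every b ∈ {0,1}^U the system of parity equations ∑_{v ∈ N(u)} x_{uv} ≡ b_u (mod 2), for all u ∈ U, has a solution x ∈ {0,1}^E. -/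
private lemma aux_17 {V : Type*} [Fintype V] [DecidableEq V] (G : SimpleGraph V)
    [DecidableRel G.Adj] (U : Finset V)
    (hexp : ∀ X ⊆ U, X.Nonempty → ∃ u ∈ X, ∃ v ∉ X, G.Adj u v)
    (b : V → ZMod 2) :
    ∃ x : Sym2 V → ZMod 2, ∀ u ∈ U, ∑ v ∈ G.neighborFinset u, x s(u, v) = b u := by
  classical
  induction U using Finset.strongInduction with
  | _ U ih =>
    rcases U.eq_empty_or_nonempty with rfl | hne
    · exact ⟨0, by simp⟩
    · obtain ⟨u, hu, v, hv, hadj⟩ := hexp U le_rfl hne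
      have huv : u ≠ v := G.ne_of_adj hadj
      obtain ⟨x', hx'⟩ := ih (U.erase u) (Finset.erase_ssubset hu)
        (fun X hX hXne => hexp X (hX.trans (Finset.erase_subset _ _)) hXne)
      refine ⟨fun e => x' e +
        if e = s(u, v) then b u - ∑ w ∈ G.neighborFinset u, x' s(u, w) else 0,
        fun w hw => ?_⟩
      by_cases hwu : w = u
      · subst hwu
        simp only [Sym2.eq_iff, eq_self_iff_true, true_and, huv, false_and, or_false]
        rw [Finset.sum_add_distrib, Finset.sum_ite_eq' (G.neighborFinset w) v]
        rw [if_pos (by rwa [SimpleGraph.mem_neighborFinset])]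
        ring
      · have hw' : w ∈ U.erase u := Finset.mem_erase.mpr ⟨hwu, hw⟩
        have hwv : w ≠ v := fun h => hv (h ▸ hw)
        have key : ∀ t, s(w, t) = s(u, v) → False := by
          intro t h
          rw [Sym2.eq_iff] at h
          rcases h with ⟨rfl, rfl⟩ | ⟨rfl, rfl⟩
          · exact hwu rfl
          · exact hwv rfl
        have : ∀ t ∈ G.neighborFinset w,
            (fun e => x' e +
              if e = s(u, v) then b u - ∑ w ∈ G.neighborFinset u, x' s(u, w) else 0)
              s(w, t) = x' s(w, t) := by
          intro t ht
          simp only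
          rw [if_neg (key t), add_zero]
        rw [Finset.sum_congr rfl this]
        exact hx' w hw'

theorem stmt_17 {V : Type*} [Fintype V] [DecidableEq V] (G : SimpleGraph V)
    [DecidableRel G.Adj] (U : Finset V) (hU : 2 * U.card ≤ Fintype.card V)
    (hexp : ∀ X ⊆ U, X.Nonempty → ∃ u ∈ X, ∃ v ∉ X, G.Adj u v)
    (b : V → ZMod 2) :
    ∃ x : Sym2 V → ZMod 2, ∀ u ∈ U, ∑ v ∈ G.neighborFinset u, x s(u, v) = b u :=
  aux_17 G U hexp b
end

section
/- Let P ⊆ [0,1]^n be a polytope and let x̄ ∈ {0,1/2,1}^n have at least one fractional coordinate. Suppose that for every fractional coordinate i of x̄, both x̄^(i,0) and x̄^(i,1) (obtained by setting coordinate i to 0 and 1 respectively) lie in P. Then for every valid inequality ⟨π, x⟩ ≤ π₀ for P with π ∈ ℤ^n, π₀ ∈ ℤ, the point x̄ lies in conv({x ∈ {0,1}^n : ⟨π, x⟩ ≤ π₀}). -/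
lemma exists_signs {n : ℕ} {C : ℝ} (hC : 0 ≤ C) (f : Fin n → ℝ) :
    ∀ s : Finset (Fin n), (∀ i ∈ s, |f i| ≤ C) →
    ∃ ε : Fin n → ℝ, (∀ i, ε i = 1 ∨ ε i = -1) ∧ |∑ i ∈ s, ε i * f i| ≤ C := by
  classical
  intro s
  induction s using Finset.induction_on with
  | empty => intro _; exact ⟨fun _ => 1, fun _ => Or.inl rfl, by simpa using hC⟩
  | @insert a s ha ih =>
    intro hf
    obtain ⟨ε, hε1, hε2⟩ := ih (fun i hi => hf i (Finset.mem_insert_of_mem hi))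
    set t := ∑ i ∈ s, ε i * f i with ht
    set σ : ℝ := if 0 ≤ t * f a then -1 else 1 with hσ
    refine ⟨Function.update ε a σ, ?_, ?_⟩
    · intro i
      by_cases h : i = a
      · subst h
        rw [Function.update_self, hσ]
        split
        · exact Or.inr rfl
        · exact Or.inl rfl
      · rw [Function.update_of_ne h]; exact hε1 i
    · rw [Finset.sum_insert ha]
      have hsum : ∑ i ∈ s, Function.update ε a σ i * f i = t :=
        Finset.sum_congr rfl (fun i hi => by
          rw [Function.update_of_ne (by rintro rfl; exact ha hi)])
      rw [Function.update_self, hsum]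
      have hfa : |f a| ≤ C := hf a (Finset.mem_insert_self a s)
      have hopp : (σ * f a) * t ≤ 0 := by
        by_cases h : 0 ≤ t * f a
        · rw [hσ, if_pos h]; nlinarith
        · rw [hσ, if_neg h]; nlinarith
      have hσa : |σ * f a| ≤ C := by
        have h1 : |σ| = 1 := by rw [hσ]; split <;> simp
        rw [abs_mul, h1, one_mul]; exact hfa
      rw [abs_le] at hε2 hσa ⊢
      constructor <;> rcases le_or_gt t 0 with h | h <;> nlinarith

theorem stmt_18 (n : ℕ) (P : Set (Fin n → ℝ)) (hconv : Convex ℝ P)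
    (hcube : P ⊆ Set.Icc (fun _ => (0 : ℝ)) (fun _ => (1 : ℝ)))
    (x : Fin n → ℝ) (hhalf : ∀ i, x i = 0 ∨ x i = 1 / 2 ∨ x i = 1)
    (hfrac : ∃ i, x i = 1 / 2)
    (hround : ∀ i, x i = 1 / 2 →
      (fun j => if j = i then (0 : ℝ) else x j) ∈ P ∧
      (fun j => if j = i then (1 : ℝ) else x j) ∈ P)
    (π : Fin n → ℤ) (π₀ : ℤ) (hvalid : ∀ y ∈ P, ∑ i, (π i : ℝ) * y i ≤ (π₀ : ℝ)) :
    x ∈ convexHull ℝ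
      {y : Fin n → ℝ | (∀ i, y i = 0 ∨ y i = 1) ∧ ∑ i, (π i : ℝ) * y i ≤ (π₀ : ℝ)} := by
  classical
  obtain ⟨i₀, hi₀⟩ := hfrac
  set Z : ℝ := ∑ j, (π j : ℝ) * x j with hZ
  -- key computation for rounded points
  have key : ∀ i, x i = 1/2 → ∀ c : ℝ,
      ∑ j, (π j : ℝ) * (if j = i then c else x j) = Z + (π i : ℝ) * (c - x i) := by
    intro i _ c
    have h1 : ∀ j, (π j : ℝ) * (if j = i then c else x j)
        = (π j : ℝ) * x j + (if j = i then (π j : ℝ) * (c - x j) else 0) := by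
      intro j; split <;> ring
    simp_rw [h1, Finset.sum_add_distrib]
    rw [Finset.sum_ite_eq' Finset.univ i (fun j => (π j : ℝ) * (c - x j))]
    simp [hZ]
  have hbound : ∀ i, x i = 1/2 →
      Z + (π i : ℝ)/2 ≤ (π₀ : ℝ) ∧ Z - (π i : ℝ)/2 ≤ (π₀ : ℝ) := by
    intro i hi
    obtain ⟨h0, h1⟩ := hround i hi
    have v0 := hvalid _ h0
    have v1 := hvalid _ h1
    rw [key i hi 0, hi] at v0
    rw [key i hi 1, hi] at v1
    constructor <;> [linarith [v1]; linarith [v0]]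
  set C : ℝ := 2 * ((π₀ : ℝ) - Z) with hCdef
  have hC : 0 ≤ C := by
    obtain ⟨h1, h2⟩ := hbound i₀ hi₀
    rw [hCdef]; linarith
  set E : Finset (Fin n) := Finset.univ.filter (fun i => x i = 1/2) with hE
  have hmemE : ∀ i, i ∈ E ↔ x i = 1/2 := by
    intro i; rw [hE, Finset.mem_filter]; simp
  have habs : ∀ i ∈ E, |(π i : ℝ)| ≤ C := by
    intro i hi
    obtain ⟨h1, h2⟩ := hbound i ((hmemE i).mp hi)
    rw [abs_le, hCdef]; constructor <;> linarith
  obtain ⟨ε, hε1, hS⟩ := exists_signs hC (fun i => (π i : ℝ)) E habs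
  rw [abs_le] at hS
  set S : ℝ := ∑ i ∈ E, ε i * (π i : ℝ) with hSdef
  set u : Fin n → ℝ := fun j => if x j = 1/2 then (1 + ε j)/2 else x j with hu
  set v : Fin n → ℝ := fun j => if x j = 1/2 then (1 - ε j)/2 else x j with hv
  have hu01 : ∀ j, u j = 0 ∨ u j = 1 := by
    intro j
    rw [hu]
    dsimp only
    split
    · rcases hε1 j with h | h <;> rw [h] <;> [right; left] <;> norm_num
    · rename_i h
      rcases hhalf j with h' | h' | h'
      · exact Or.inl h'
      · exact absurd h' h
      · exact Or.inr h'
  have hv01 : ∀ j, v j = 0 ∨ v j = 1 := by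
    intro j
    rw [hv]
    dsimp only
    split
    · rcases hε1 j with h | h <;> rw [h] <;> [left; right] <;> norm_num
    · rename_i h
      rcases hhalf j with h' | h' | h'
      · exact Or.inl h'
      · exact absurd h' h
      · exact Or.inr h'
  have hsumu : ∑ j, (π j : ℝ) * u j = Z + S / 2 := by
    have h1 : ∀ j, (π j : ℝ) * u j
        = (π j : ℝ) * x j + (if x j = 1/2 then ε j * (π j : ℝ) / 2 else 0) := by
      intro j
      rw [hu]
      dsimp only
      split
      · rename_i h; rw [h]; ring
      · ring
    simp_rw [h1, Finset.sum_add_distrib]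
    rw [← Finset.sum_filter, ← hE, ← hZ, hSdef]
    rw [Finset.sum_div]
  have hsumv : ∑ j, (π j : ℝ) * v j = Z - S / 2 := by
    have h1 : ∀ j, (π j : ℝ) * v j
        = (π j : ℝ) * x j - (if x j = 1/2 then ε j * (π j : ℝ) / 2 else 0) := by
      intro j
      rw [hv]
      dsimp only
      split
      · rename_i h; rw [h]; ring
      · ring
    simp_rw [h1, Finset.sum_sub_distrib]
    rw [← Finset.sum_filter, ← hE, ← hZ, hSdef]
    rw [Finset.sum_div]
  have humem : u ∈ {y : Fin n → ℝ | (∀ i, y i = 0 ∨ y i = 1) ∧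
      ∑ i, (π i : ℝ) * y i ≤ (π₀ : ℝ)} := by
    refine ⟨hu01, ?_⟩
    rw [hsumu]; rw [hCdef] at hS; linarith [hS.2]
  have hvmem : v ∈ {y : Fin n → ℝ | (∀ i, y i = 0 ∨ y i = 1) ∧
      ∑ i, (π i : ℝ) * y i ≤ (π₀ : ℝ)} := by
    refine ⟨hv01, ?_⟩
    rw [hsumv]; rw [hCdef] at hS; linarith [hS.1]
  have hxuv : x = (1/2 : ℝ) • u + (1/2 : ℝ) • v := by
    funext j
    simp only [Pi.add_apply, Pi.smul_apply, smul_eq_mul, hu, hv]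
    split
    · rename_i h; rw [h]; ring
    · ring
  rw [hxuv]
  exact (convex_convexHull ℝ _) (subset_convexHull ℝ _ humem)
    (subset_convexHull ℝ _ hvmem) (by norm_num) (by norm_num) (by norm_num)
end
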